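/- Let α, β, γ, δ, η > 0, ρₑ > 0, vₑ ∈ ℝ³, and let A₀(ξ) be the 8×8 symbol of the linearized Cattaneo-Christov-Jordan system at an equilibrium state. For every ξ ∈ ℝ³ \ {0}, any nonzero vector Z = (0, z, 0, 0, 0, 0) with z ∈ ℝ³, z ≠ 0, z·ξ = 0 (placed in components 2–4 of ℝ⁸) satisfies D Z = 0 and A₀(ξ) Z = (vₑ·ξ) Z. Hence the Kawashima–Shizuta genuinely coupling condition fails at every equilibrium state. -/

import Mathlib

open Finset Matrix

/-- The 8×8 symbol of the linearized Cattaneo-Christov-Jordan system at equilibrium. -/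
def A0sym (α β γ δ η ρe : ℝ) (ve ξ : Fin 3 → ℝ) : Matrix (Fin 8) (Fin 8) ℝ :=
  let w : ℝ := ∑ i, ve i * ξ i
  !![w,        ρe * ξ 0, ρe * ξ 1, ρe * ξ 2, 0,        0, 0, 0;
     α * ξ 0,  w,        0,        0,        η * ξ 0,  0, 0, 0;
     α * ξ 1,  0,        w,        0,        η * ξ 1,  0, 0, 0;
     α * ξ 2,  0,        0,        w,        η * ξ 2,  0, 0, 0;
     0,        β * ξ 0,  β * ξ 1,  β * ξ 2,  w,        γ * ξ 0, γ * ξ 1, γ * ξ 2;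
     0,        0,        0,        0,        δ * ξ 0,  w, 0, 0;
     0,        0,        0,        0,        δ * ξ 1,  0, w, 0;
     0,        0,        0,        0,        δ * ξ 2,  0, 0, w]

/-- The relaxation Jacobian `D`. -/
noncomputable def Dmat (τ : ℝ) : Matrix (Fin 8) (Fin 8) ℝ :=
  Matrix.diagonal fun i => if 5 ≤ (i : ℕ) then 1 / τ else 0


section aux
variable {R : Type*} (a b c d e f g h : R)
lemma vec8_three : (![a,b,c,d,e,f,g,h] : Fin 8 → R) 3 = d := rfl
lemma vec8_four  : (![a,b,c,d,e,f,g,h] : Fin 8 → R) 4 = e := rfl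
lemma vec8_five  : (![a,b,c,d,e,f,g,h] : Fin 8 → R) 5 = f := rfl
lemma vec8_six   : (![a,b,c,d,e,f,g,h] : Fin 8 → R) 6 = g := rfl
lemma vec8_seven : (![a,b,c,d,e,f,g,h] : Fin 8 → R) 7 = h := rfl
end aux

lemma main_part (α β γ δ η ρe τ : ℝ) (ve : Fin 3 → ℝ)
    (ξ : Fin 3 → ℝ) (z : Fin 3 → ℝ) (hz : z ≠ 0) (horth : (∑ i, ξ i * z i) = 0) :
      (![0, z 0, z 1, z 2, 0, 0, 0, 0] : Fin 8 → ℝ) ≠ 0 ∧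
      (Dmat τ).mulVec ![0, z 0, z 1, z 2, 0, 0, 0, 0] = 0 ∧
        (A0sym α β γ δ η ρe ve ξ).mulVec ![0, z 0, z 1, z 2, 0, 0, 0, 0]
          = (∑ i, ve i * ξ i) • ![0, z 0, z 1, z 2, 0, 0, 0, 0] := by
  have hsum : ξ 0 * z 0 + ξ 1 * z 1 + ξ 2 * z 2 = 0 := by
    simpa [Fin.sum_univ_three] using horth
  refine ⟨?_, ?_, ?_⟩
  · intro h
    apply hz
    funext i
    fin_cases i
    · exact congrFun h 1
    · exact congrFun h 2
    · exact congrFun h 3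
  · funext i
    rw [Dmat, Matrix.mulVec_diagonal]
    fin_cases i <;>
      simp [vec8_three, vec8_four, vec8_five, vec8_six, vec8_seven]
  · simp only [A0sym, Matrix.cons_mulVec, Matrix.empty_mulVec, Matrix.cons_dotProduct,
      Matrix.dotProduct_of_isEmpty, Matrix.smul_cons, Matrix.smul_empty, smul_eq_mul,
      Fin.sum_univ_three]
    funext i
    fin_cases i <;>
      simp [vec8_three, vec8_four, vec8_five, vec8_six, vec8_seven] <;>
      first
        | linear_combination ρe * hsum
        | linear_combination β * hsum

theorem stmt_11 (α β γ δ η ρe τ : ℝ) (hα : 0 < α) (hβ : 0 < β) (hγ : 0 < γ)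
    (hδ : 0 < δ) (hη : 0 < η) (hρ : 0 < ρe) (hτ : 0 < τ) (ve : Fin 3 → ℝ) :
    (∀ ξ : Fin 3 → ℝ, ξ ≠ 0 → ∀ z : Fin 3 → ℝ, z ≠ 0 → (∑ i, ξ i * z i) = 0 →
      let Z : Fin 8 → ℝ := ![0, z 0, z 1, z 2, 0, 0, 0, 0]
      Z ≠ 0 ∧ (Dmat τ).mulVec Z = 0 ∧
        (A0sym α β γ δ η ρe ve ξ).mulVec Z = (∑ i, ve i * ξ i) • Z) ∧
    -- hence the Kawashima–Shizuta genuinely coupling condition fails: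
    ∀ ξ : Fin 3 → ℝ, ξ ≠ 0 → ∃ Z : Fin 8 → ℝ, Z ≠ 0 ∧ (Dmat τ).mulVec Z = 0 ∧
      ∃ μ : ℝ, (A0sym α β γ δ η ρe ve ξ).mulVec Z = μ • Z := by
  constructor
  · intro ξ _ z hz horth
    exact main_part α β γ δ η ρe τ ve ξ z hz horth
  · intro ξ hξ
    by_cases h01 : ξ 0 = 0 ∧ ξ 1 = 0
    · have := main_part α β γ δ η ρe τ ve ξ ![1, 0, 0]
        (by intro h; simpa using congrFun h 0)
        (by simp [Fin.sum_univ_three, h01.1])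
      exact ⟨_, this.1, this.2.1, _, this.2.2⟩
    · have hz : (![ξ 1, -ξ 0, 0] : Fin 3 → ℝ) ≠ 0 := by
        intro h
        have h0 : ξ 1 = 0 := by simpa using congrFun h 0
        have h1 : ξ 0 = 0 := by simpa using congrFun h 1
        exact h01 ⟨h1, h0⟩
      have := main_part α β γ δ η ρe τ ve ξ ![ξ 1, -ξ 0, 0] hz
        (by simp [Fin.sum_univ_three]; ring)
      exact ⟨_, this.1, this.2.1, _, this.2.2⟩
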